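/- arXiv:2603.13690 — 2 statements merged into one kernel-verified Lean document; each statement's English description precedes it below -/
import Mathlib

section
/- Let p ∈ (0,1]. Under the elephant random walk hypotheses, the process (a_n·S_n)_{n≥1} is a martingale with respect to (𝓕_n)_{n≥1}: for every n ≥ 1, E[a_{n+1}·S_{n+1} | 𝓕_n] = a_n·S_n almost surely. -/
open MeasureTheory

/-- `a p n = Γ(2p)·Γ(n)/Γ(n+2p−1)`. -/
noncomputable def a (p : ℝ) (n : ℕ) : ℝ :=
  Real.Gamma (2*p) * Real.Gamma n / Real.Gamma ((n:ℝ) + 2*p - 1)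

/-- The walk `S_n = X_1 + ⋯ + X_n`. -/
def erwS {Ω : Type*} (X : ℕ → Ω → ℝ) (n : ℕ) (ω : Ω) : ℝ :=
  ∑ k ∈ Finset.Icc 1 n, X k ω

lemma a_ratio (p : ℝ) (hp : p ∈ Set.Ioc (0:ℝ) 1) (n : ℕ) (hn : 1 ≤ n) :
    a p (n+1) * ((n:ℝ) + (2*p - 1)) / n = a p n := by
  have hn0 : (0:ℝ) < n := by exact_mod_cast hn
  have hx : (0:ℝ) < (n:ℝ) + 2*p - 1 := by
    have : (1:ℝ) ≤ n := by exact_mod_cast hn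
    nlinarith [hp.1]
  have hΓn1 : Real.Gamma ((n:ℝ) + 1) = (n:ℝ) * Real.Gamma n :=
    Real.Gamma_add_one (by positivity)
  have hΓx1 : Real.Gamma (((n:ℝ) + 2*p - 1) + 1) = ((n:ℝ) + 2*p - 1) * Real.Gamma ((n:ℝ) + 2*p - 1) :=
    Real.Gamma_add_one (ne_of_gt hx)
  have hΓx_ne : Real.Gamma ((n:ℝ) + 2*p - 1) ≠ 0 := ne_of_gt (Real.Gamma_pos_of_pos hx)
  have hΓx1_ne : Real.Gamma ((n:ℝ) + 2*p) ≠ 0 := ne_of_gt (Real.Gamma_pos_of_pos (by linarith))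
  simp only [a]
  push_cast
  have h1 : (n:ℝ) + 1 + 2*p - 1 = ((n:ℝ) + 2*p - 1) + 1 := by ring
  rw [h1, hΓx1, hΓn1]
  field_simp
  ring

theorem stmt_8 {Ω : Type*} {m0 : MeasurableSpace Ω} (μ : Measure Ω)
    [IsProbabilityMeasure μ] (ℱ : Filtration ℕ m0)
    (X : ℕ → Ω → ℝ) (hadapted : Adapted ℱ X)
    (hXpm : ∀ n : ℕ, 1 ≤ n → ∀ᵐ ω ∂μ, X n ω = 1 ∨ X n ω = -1)
    (p : ℝ) (hp : p ∈ Set.Ioc (0:ℝ) 1)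
    (hcond : ∀ n : ℕ, 1 ≤ n →
      μ[X (n+1) | ℱ n] =ᵐ[μ] fun ω => (2*p - 1) * erwS X n ω / n) :
    ∀ n : ℕ, 1 ≤ n →
      μ[fun ω => a p (n+1) * erwS X (n+1) ω | ℱ n]
        =ᵐ[μ] fun ω => a p n * erwS X n ω := by
  intro n hn
  -- integrability of each X k for k ≥ 1
  have hint : ∀ k : ℕ, 1 ≤ k → Integrable (X k) μ := by
    intro k hk
    refine Integrable.mono' (integrable_const 1) ((hadapted k).mono (ℱ.le k) le_rfl).aestronglyMeasurable ?_
    filter_upwards [hXpm k hk] with ω hω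
    rcases hω with h | h <;> simp [h]
  have hSint : ∀ m : ℕ, Integrable (erwS X m) μ := by
    intro m
    have : Integrable (fun ω => ∑ k ∈ Finset.Icc 1 m, X k ω) μ :=
      integrable_finset_sum _ (fun k hk => hint k (Finset.mem_Icc.mp hk).1)
    exact this
  -- measurability of erwS X n w.r.t. ℱ n
  have hSmeas : StronglyMeasurable[ℱ n] (erwS X n) := by
    rw [show erwS X n = ∑ k ∈ Finset.Icc 1 n, X k from by funext ω; simp [erwS, Finset.sum_apply]]
    apply Finset.stronglyMeasurable_sum
    intro k hk
    exact ((hadapted k).mono (ℱ.mono (Finset.mem_Icc.mp hk).2) le_rfl).stronglyMeasurable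
  have hsplit : (fun ω => a p (n+1) * erwS X (n+1) ω)
      = (fun ω => a p (n+1) * erwS X n ω) + (fun ω => a p (n+1) * X (n+1) ω) := by
    funext ω
    simp only [erwS, Pi.add_apply]
    rw [Finset.sum_Icc_succ_top (by omega : 1 ≤ n + 1)]
    ring
  rw [hsplit]
  have h1 : μ[(fun ω => a p (n+1) * erwS X n ω) + (fun ω => a p (n+1) * X (n+1) ω) | ℱ n]
      =ᵐ[μ] μ[fun ω => a p (n+1) * erwS X n ω | ℱ n] + μ[fun ω => a p (n+1) * X (n+1) ω | ℱ n] :=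
    condExp_add ((hSint n).const_mul _) ((hint (n+1) (by omega)).const_mul _) (ℱ n)
  refine h1.trans ?_
  have h2 : μ[fun ω => a p (n+1) * erwS X n ω | ℱ n] = fun ω => a p (n+1) * erwS X n ω :=
    condExp_of_stronglyMeasurable (ℱ.le n) (hSmeas.const_mul _) ((hSint n).const_mul _)
  have h3 : μ[fun ω => a p (n+1) * X (n+1) ω | ℱ n]
      =ᵐ[μ] fun ω => a p (n+1) * ((2*p - 1) * erwS X n ω / n) := by
    have hsmul : (fun ω => a p (n+1) * X (n+1) ω) = a p (n+1) • X (n+1) := by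
      funext ω; simp
    rw [hsmul]
    refine (condExp_smul (a p (n+1)) (X (n+1)) (ℱ n)).trans ?_
    filter_upwards [hcond n hn] with ω hω
    simp [hω]
  rw [h2]
  refine (Filter.EventuallyEq.add (Filter.EventuallyEq.refl _ _) h3).trans ?_
  have hn0 : (n:ℝ) ≠ 0 := by exact_mod_cast Nat.one_le_iff_ne_zero.mp hn
  filter_upwards with ω
  have key := a_ratio p hp n hn
  show a p (n+1) * erwS X n ω + a p (n+1) * ((2*p - 1) * erwS X n ω / n) = a p n * erwS X n ω
  rw [← key]
  field_simp
end

section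
/- Let 3/4 < p < 1. Under the elephant random walk hypotheses, set ΔM_k = a_k·(X_k − E[X_k | 𝓕_{k−1}]) for k ≥ 2. Then for every ε > 0 and every t ≥ 0, almost surely (1/s_n²)·∑_{k=n+1}^{n+⌊nt⌋} E[(ΔM_k)²·1_{{|ΔM_k| > ε·s_n}} | 𝓕_{k−1}] → 0 as n → ∞. -/
open MeasureTheory

/-- `s p n = (Γ(2p)/√(4p−3))·n^{3/2−2p}`. -/
noncomputable def s (p : ℝ) (n : ℕ) : ℝ :=
  Real.Gamma (2*p) / Real.sqrt (4*p - 3) * (n:ℝ) ^ ((3:ℝ)/2 - 2*p)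

/-- The martingale difference `ΔM_k = a_k (X_k − E[X_k | 𝓕_{k−1}])`. -/
noncomputable def dM {Ω : Type*} {m0 : MeasurableSpace Ω} (μ : Measure Ω)
    (ℱ : Filtration ℕ m0) (p : ℝ) (X : ℕ → Ω → ℝ) (k : ℕ) (ω : Ω) : ℝ :=
  a p k * (X k ω - (μ[X k | ℱ (k-1)]) ω)


lemma gamma_interp {x t : ℝ} (hx : 0 < x) (ht0 : 0 < t) (ht1 : t < 1) :
    Real.Gamma (x + 1) ≤ Real.Gamma (x + t) * (x + t) ^ (1 - t) := by
  have hxt : (0:ℝ) < x + t := by linarith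
  have hxt1 : (0:ℝ) < x + t + 1 := by linarith
  have h := Real.convexOn_log_Gamma.2 (Set.mem_Ioi.2 hxt) (Set.mem_Ioi.2 hxt1)
      ht0.le (by linarith : (0:ℝ) ≤ 1 - t) (by ring)
  simp only [smul_eq_mul, Function.comp_apply] at h
  have hpt : t * (x + t) + (1 - t) * (x + t + 1) = x + 1 := by ring
  rw [hpt] at h
  have hrec : Real.Gamma (x + t + 1) = (x + t) * Real.Gamma (x + t) :=
    Real.Gamma_add_one hxt.ne'
  have hGpos : 0 < Real.Gamma (x + t) := Real.Gamma_pos_of_pos hxt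
  have hG1pos : 0 < Real.Gamma (x + 1) := Real.Gamma_pos_of_pos (by linarith)
  rw [hrec, Real.log_mul hxt.ne' hGpos.ne'] at h
  have : Real.Gamma (x + 1) ≤ Real.exp (Real.log (Real.Gamma (x + t)) + (1 - t) * Real.log (x + t)) := by
    rw [← Real.exp_log hG1pos]
    apply Real.exp_le_exp.2
    nlinarith [h]
  calc Real.Gamma (x + 1) ≤ _ := this
    _ = Real.Gamma (x + t) * (x + t) ^ (1 - t) := by
        rw [Real.exp_add, Real.exp_log hGpos, Real.rpow_def_of_pos hxt, mul_comm (Real.log (x+t))]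

lemma a_pos {p : ℝ} (hp : 0 < p) {n : ℕ} (hn : 1 ≤ n) : 0 < a p n := by
  have h1 : (1:ℝ) ≤ n := by exact_mod_cast hn
  unfold a
  apply div_pos (mul_pos (Real.Gamma_pos_of_pos (by linarith)) (Real.Gamma_pos_of_pos (by linarith)))
  exact Real.Gamma_pos_of_pos (by linarith)

lemma a_succ_le {p : ℝ} (hp : 1/2 ≤ p) {k : ℕ} (hk : 1 ≤ k) : a p (k+1) ≤ a p k := by
  have h1 : (1:ℝ) ≤ k := by exact_mod_cast hk
  have hknz : (k:ℝ) ≠ 0 := by linarith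
  have hd : (0:ℝ) < (k:ℝ) + 2*p - 1 := by linarith
  have hnum : Real.Gamma ((k:ℕ)+1 : ℕ) = (k:ℝ) * Real.Gamma k := by
    push_cast
    exact Real.Gamma_add_one hknz
  have hden : Real.Gamma (((k:ℕ)+1 : ℕ) : ℝ) = (k:ℝ) * Real.Gamma k := by
    push_cast
    exact Real.Gamma_add_one hknz
  have hden2 : Real.Gamma ((((k:ℕ)+1 : ℕ)):ℝ) = (k:ℝ) * Real.Gamma k := hden
  unfold a
  have hG : Real.Gamma (((k:ℕ)+1 : ℕ) + 2*p - 1) = ((k:ℝ) + 2*p - 1) * Real.Gamma ((k:ℝ) + 2*p - 1) := by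
    have : (((k:ℕ)+1 : ℕ) : ℝ) + 2*p - 1 = ((k:ℝ) + 2*p - 1) + 1 := by push_cast; ring
    rw [this, Real.Gamma_add_one hd.ne']
  rw [hG, hden2]
  have hG2p : 0 < Real.Gamma (2*p) := Real.Gamma_pos_of_pos (by linarith)
  have hGk : 0 < Real.Gamma (k:ℝ) := Real.Gamma_pos_of_pos (by linarith)
  have hGd : 0 < Real.Gamma ((k:ℝ) + 2*p - 1) := Real.Gamma_pos_of_pos hd
  rw [div_le_div_iff₀ (by positivity) (by positivity)]
  have hle : (k:ℝ) ≤ (k:ℝ) + 2*p - 1 := by linarith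
  have key : Real.Gamma (2*p) * Real.Gamma (k:ℝ) * (k:ℝ) ≤ Real.Gamma (2*p) * Real.Gamma (k:ℝ) * ((k:ℝ) + 2*p - 1) :=
    mul_le_mul_of_nonneg_left hle (by positivity)
  calc Real.Gamma (2*p) * ((k:ℝ) * Real.Gamma (k:ℝ)) * Real.Gamma ((k:ℝ) + 2*p - 1)
      = Real.Gamma (2*p) * Real.Gamma (k:ℝ) * (k:ℝ) * Real.Gamma ((k:ℝ) + 2*p - 1) := by ring
    _ ≤ Real.Gamma (2*p) * Real.Gamma (k:ℝ) * ((k:ℝ) + 2*p - 1) * Real.Gamma ((k:ℝ) + 2*p - 1) :=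
        mul_le_mul_of_nonneg_right key hGd.le
    _ = Real.Gamma (2*p) * Real.Gamma (k:ℝ) * (((k:ℝ) + 2*p - 1) * Real.Gamma ((k:ℝ) + 2*p - 1)) := by ring

lemma a_le_of_le {p : ℝ} (hp : 1/2 ≤ p) {k m : ℕ} (hk : 1 ≤ k) (hkm : k ≤ m) :
    a p m ≤ a p k := by
  induction m, hkm using Nat.le_induction with
  | base => exact le_refl _
  | succ n hn ih => exact le_trans (a_succ_le hp (le_trans hk hn)) ih

lemma a_succ_bound {p : ℝ} (hp : 3/4 < p) (hp' : p < 1) {n : ℕ} (hn : 1 ≤ n) :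
    a p (n+1) ≤ Real.Gamma (2*p) * ((n:ℝ)+1) ^ (2-2*p) / n := by
  have h1 : (1:ℝ) ≤ n := by exact_mod_cast hn
  have hx0 : (0:ℝ) < n := by linarith
  have ht0 : (0:ℝ) < 2*p - 1 := by linarith
  have ht1 : 2*p - 1 < 1 := by linarith
  have hinterp := gamma_interp hx0 ht0 ht1
  have hG2p : 0 < Real.Gamma (2*p) := Real.Gamma_pos_of_pos (by linarith)
  have hdpos : (0:ℝ) < (n:ℝ) + 2*p - 1 := by linarith
  have hGd : 0 < Real.Gamma ((n:ℝ) + (2*p-1)) := Real.Gamma_pos_of_pos (by linarith)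
  -- numerator bound
  have hnum : Real.Gamma ((n:ℝ) + 1) ≤ Real.Gamma ((n:ℝ) + (2*p-1)) * ((n:ℝ)+1) ^ (2-2*p) := by
    refine le_trans hinterp ?_
    have : ((n:ℝ) + (2*p-1)) ^ (1-(2*p-1)) ≤ ((n:ℝ)+1) ^ (2-2*p) := by
      have he : (1:ℝ)-(2*p-1) = 2-2*p := by ring
      rw [he]
      exact Real.rpow_le_rpow (by linarith) (by linarith) (by linarith)
    exact mul_le_mul_of_nonneg_left this hGd.le
  -- denominator
  have hden : Real.Gamma (((n:ℕ)+1 : ℕ) + 2*p - 1)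
      = ((n:ℝ) + (2*p-1)) * Real.Gamma ((n:ℝ) + (2*p-1)) := by
    have : ((((n:ℕ)+1 : ℕ)) : ℝ) + 2*p - 1 = ((n:ℝ) + (2*p-1)) + 1 := by push_cast; ring
    rw [this, Real.Gamma_add_one (by linarith)]
  unfold a
  rw [hden]
  have hnumcast : Real.Gamma ((((n:ℕ)+1:ℕ)):ℝ) = Real.Gamma ((n:ℝ)+1) := by push_cast; ring_nf
  rw [hnumcast]
  rw [div_le_div_iff₀ (by positivity) hx0]
  calc Real.Gamma (2*p) * Real.Gamma ((n:ℝ)+1) * (n:ℝ)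
      ≤ Real.Gamma (2*p) * (Real.Gamma ((n:ℝ) + (2*p-1)) * ((n:ℝ)+1) ^ (2-2*p)) * ((n:ℝ) + (2*p-1)) := by
        apply mul_le_mul
        · exact mul_le_mul_of_nonneg_left hnum hG2p.le
        · linarith
        · exact hx0.le
        · positivity
    _ = Real.Gamma (2*p) * ((n:ℝ)+1) ^ (2-2*p) * (((n:ℝ) + (2*p-1)) * Real.Gamma ((n:ℝ) + (2*p-1))) := by
        ring

lemma s_pos {p : ℝ} (hp : 3/4 < p) (hp' : p < 1) {n : ℕ} (hn : 1 ≤ n) : 0 < s p n := by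
  have h1 : (0:ℝ) < n := by exact_mod_cast hn
  have hG2p : 0 < Real.Gamma (2*p) := Real.Gamma_pos_of_pos (by linarith)
  have hs : (0:ℝ) < Real.sqrt (4*p-3) := Real.sqrt_pos.2 (by linarith)
  unfold s
  positivity

lemma ratio_tendsto {p : ℝ} (hp : 3/4 < p) (hp' : p < 1) :
    Filter.Tendsto (fun n : ℕ => 2 * a p (n+1) / s p n) Filter.atTop (nhds 0) := by
  have hG2p : 0 < Real.Gamma (2*p) := Real.Gamma_pos_of_pos (by linarith)
  have hsq : (0:ℝ) < Real.sqrt (4*p-3) := Real.sqrt_pos.2 (by linarith)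
  set C : ℝ := 2^((3:ℝ)-2*p) * Real.sqrt (4*p-3) with hC
  have hCtend : Filter.Tendsto (fun n : ℕ => C * (n:ℝ) ^ (-(1/2 : ℝ))) Filter.atTop (nhds 0) := by
    have h := (tendsto_rpow_neg_atTop (by norm_num : (0:ℝ) < 1/2)).comp
      tendsto_natCast_atTop_atTop (α := ℕ)
    simpa using h.const_mul C
  apply squeeze_zero' (g := fun n : ℕ => C * (n:ℝ) ^ (-(1/2 : ℝ)))
  · filter_upwards [Filter.eventually_ge_atTop 1] with n hn
    have := a_pos (by linarith : (0:ℝ) < p) (Nat.le_succ_of_le hn)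
    have := s_pos hp hp' hn
    positivity
  · filter_upwards [Filter.eventually_ge_atTop 1] with n hn
    have h1 : (1:ℝ) ≤ n := by exact_mod_cast hn
    have hx0 : (0:ℝ) < n := by linarith
    have hspos := s_pos hp hp' hn
    rw [div_le_iff₀ hspos]
    have hbd := a_succ_bound hp hp' hn
    have hstep : 2 * a p (n+1) ≤ 2 * (Real.Gamma (2*p) * ((n:ℝ)+1) ^ (2-2*p) / n) := by linarith
    refine le_trans hstep ?_
    -- RHS equals 2^{3-2p} Γ(2p) n^{1-2p}
    have hcomb : (n:ℝ) ^ (-(1/2:ℝ)) * (n:ℝ) ^ ((3:ℝ)/2 - 2*p) = (n:ℝ) ^ ((1:ℝ)-2*p) := by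
      rw [← Real.rpow_add hx0]; congr 1; ring
    have hrhs : C * (n:ℝ) ^ (-(1/2:ℝ)) * s p n
        = 2^((3:ℝ)-2*p) * Real.Gamma (2*p) * (n:ℝ) ^ ((1:ℝ)-2*p) := by
      unfold s
      rw [hC, ← hcomb]
      field_simp
      ring_nf; exact mul_inv_cancel₀ (Real.sqrt_pos.2 (by linarith)).ne'
    rw [hrhs]
    -- LHS ≤ RHS
    have h2x : ((n:ℝ)+1) ^ (2-2*p) ≤ (2*(n:ℝ)) ^ (2-2*p) :=
      Real.rpow_le_rpow (by linarith) (by linarith) (by linarith)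
    have hmul : (2*(n:ℝ)) ^ (2-2*p) = 2^((2:ℝ)-2*p) * (n:ℝ)^((2:ℝ)-2*p) :=
      Real.mul_rpow (by norm_num) (by linarith)
    have hxsplit : (n:ℝ)^((2:ℝ)-2*p) = (n:ℝ) * (n:ℝ)^((1:ℝ)-2*p) := by
      have h := Real.rpow_add hx0 1 ((1:ℝ)-2*p)
      rw [Real.rpow_one] at h
      rw [← h]; congr 1; ring
    have h2split : (2:ℝ)^((3:ℝ)-2*p) = 2 * 2^((2:ℝ)-2*p) := by
      have h := Real.rpow_add (by norm_num : (0:ℝ)<2) 1 ((2:ℝ)-2*p)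
      rw [Real.rpow_one] at h
      rw [← h]; congr 1; ring
    calc 2 * (Real.Gamma (2*p) * ((n:ℝ)+1) ^ (2-2*p) / n)
        ≤ 2 * (Real.Gamma (2*p) * (2^((2:ℝ)-2*p) * ((n:ℝ) * (n:ℝ)^((1:ℝ)-2*p))) / n) := by
          gcongr
          rw [← hxsplit, ← hmul]
          exact h2x
      _ = 2^((3:ℝ)-2*p) * Real.Gamma (2*p) * (n:ℝ) ^ ((1:ℝ)-2*p) := by
          rw [h2split]
          field_simp
  exact hCtend

theorem stmt_16 {Ω : Type*} {m0 : MeasurableSpace Ω} (μ : Measure Ω)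
    [IsProbabilityMeasure μ] (ℱ : Filtration ℕ m0)
    (X : ℕ → Ω → ℝ) (hadapted : Adapted ℱ X)
    (hXpm : ∀ n : ℕ, 1 ≤ n → ∀ᵐ ω ∂μ, X n ω = 1 ∨ X n ω = -1)
    (p : ℝ) (hp : 3/4 < p) (hp' : p < 1)
    (hcond : ∀ n : ℕ, 1 ≤ n →
      μ[X (n+1) | ℱ n] =ᵐ[μ] fun ω => (2*p - 1) * erwS X n ω / n) :
    ∀ ε : ℝ, 0 < ε → ∀ t : ℝ, 0 ≤ t →
      ∀ᵐ ω ∂μ, Filter.Tendsto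
        (fun n : ℕ => (1 / (s p n)^2) *
          ∑ k ∈ Finset.Icc (n+1) (n + ⌊(n:ℝ) * t⌋₊),
            (μ[fun ω' => (dM μ ℱ p X k ω')^2 *
                (if ε * s p n < |dM μ ℱ p X k ω'| then (1:ℝ) else 0) | ℱ (k-1)]) ω)
        Filter.atTop (nhds 0) := by
  intro ε hε t ht
  obtain ⟨N₀, hN₀⟩ := Filter.eventually_atTop.1 ((ratio_tendsto hp hp').eventually_lt_const hε)
  set N : ℕ := max N₀ 1 with hNdef
  have hN1 : 1 ≤ N := le_max_right _ _
  have hbound : ∀ n : ℕ, N ≤ n → 2 * a p (n+1) < ε * s p n := by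
    intro n hn
    have hn1 : 1 ≤ n := le_trans hN1 hn
    have hspos := s_pos hp hp' hn1
    have := hN₀ n (le_trans (le_max_left _ _) hn)
    rw [div_lt_iff₀ hspos] at this
    linarith [this]
  -- a.e. bound on dM
  have hdM : ∀ k : ℕ, 1 ≤ k → ∀ᵐ ω ∂μ, |dM μ ℱ p X k ω| ≤ 2 * a p k := by
    intro k hk
    have hXb : ∀ᵐ ω ∂μ, |X k ω| ≤ ((1:NNReal):ℝ) := by
      filter_upwards [hXpm k hk] with ω h
      rcases h with h | h <;> simp [h]
    have hcb := ae_bdd_condExp_of_ae_bdd (m := ℱ (k-1)) hXb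
    filter_upwards [hXb, hcb] with ω h1 h2
    have ha : 0 ≤ a p k := (a_pos (by linarith : (0:ℝ) < p) hk).le
    have habs : |X k ω - (μ[X k | ℱ (k-1)]) ω| ≤ 2 := by
      calc |X k ω - (μ[X k | ℱ (k-1)]) ω| ≤ |X k ω| + |(μ[X k | ℱ (k-1)]) ω| := abs_sub _ _
        _ ≤ 2 := by push_cast at h1 h2; linarith
    unfold dM
    rw [abs_mul, abs_of_nonneg ha]
    nlinarith [abs_nonneg (X k ω - (μ[X k | ℱ (k-1)]) ω)]
  -- per (n,k) the conditional expectation is a.e. zero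
  have hzero : ∀ n k : ℕ, N ≤ n → n+1 ≤ k →
      (μ[fun ω' => (dM μ ℱ p X k ω')^2 *
          (if ε * s p n < |dM μ ℱ p X k ω'| then (1:ℝ) else 0) | ℱ (k-1)]) =ᵐ[μ] 0 := by
    intro n k hNn hk
    have hn1 : 1 ≤ n := le_trans hN1 hNn
    have hk1 : 1 ≤ k := le_trans (by omega) hk
    have hfz : (fun ω' => (dM μ ℱ p X k ω')^2 *
        (if ε * s p n < |dM μ ℱ p X k ω'| then (1:ℝ) else 0)) =ᵐ[μ] 0 := by
      filter_upwards [hdM k hk1] with ω hω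
      have hak : a p k ≤ a p (n+1) := a_le_of_le (by linarith) (by omega) hk
      have hlt : ¬ (ε * s p n < |dM μ ℱ p X k ω|) := by
        push_neg
        calc |dM μ ℱ p X k ω| ≤ 2 * a p k := hω
          _ ≤ 2 * a p (n+1) := by linarith
          _ ≤ ε * s p n := (hbound n hNn).le
      simp [hlt]
    calc μ[fun ω' => (dM μ ℱ p X k ω')^2 *
          (if ε * s p n < |dM μ ℱ p X k ω'| then (1:ℝ) else 0) | ℱ (k-1)]
        =ᵐ[μ] μ[(0 : Ω → ℝ) | ℱ (k-1)] := condExp_congr_ae hfz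
      _ = 0 := condExp_zero
  have hae : ∀ᵐ ω ∂μ, ∀ n k : ℕ, N ≤ n → n+1 ≤ k →
      (μ[fun ω' => (dM μ ℱ p X k ω')^2 *
          (if ε * s p n < |dM μ ℱ p X k ω'| then (1:ℝ) else 0) | ℱ (k-1)]) ω = 0 := by
    rw [ae_all_iff]
    intro n
    rw [ae_all_iff]
    intro k
    by_cases h1 : N ≤ n
    · by_cases h2 : n+1 ≤ k
      · filter_upwards [hzero n k h1 h2] with ω hω
        intro _ _
        simpa using hω
      · exact Filter.Eventually.of_forall fun ω _ h => absurd h h2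
    · exact Filter.Eventually.of_forall fun ω h => absurd h h1
  filter_upwards [hae] with ω hω
  have heq : (fun n : ℕ => (1 / (s p n)^2) *
      ∑ k ∈ Finset.Icc (n+1) (n + ⌊(n:ℝ) * t⌋₊),
        (μ[fun ω' => (dM μ ℱ p X k ω')^2 *
            (if ε * s p n < |dM μ ℱ p X k ω'| then (1:ℝ) else 0) | ℱ (k-1)]) ω)
      =ᶠ[Filter.atTop] fun _ => (0:ℝ) := by
    filter_upwards [Filter.eventually_ge_atTop N] with n hn
    have hsum : ∑ k ∈ Finset.Icc (n+1) (n + ⌊(n:ℝ) * t⌋₊),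
        (μ[fun ω' => (dM μ ℱ p X k ω')^2 *
            (if ε * s p n < |dM μ ℱ p X k ω'| then (1:ℝ) else 0) | ℱ (k-1)]) ω = 0 := by
      refine Finset.sum_eq_zero fun k hk => ?_
      exact hω n k hn (Finset.mem_Icc.1 hk).1
    rw [hsum, mul_zero]
  exact Filter.Tendsto.congr' heq.symm tendsto_const_nhds
end
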